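/- Let r > 0, c > 0, T > 0 be large enough that τ ↦ c t - r log((t+T)/T) is strictly increasing in t for t ≥ 0, and define h implicitly by c τ = c h(τ) - r log((h(τ)+T)/T). Then 1/h'(τ) = 1 - r/(c(τ+T)) + β(τ), where β(τ) = r² log((h(τ)+T)/T) / (c(τ+T)(c(τ+T) + r log((h(τ)+T)/T))) ≥ 0 satisfies β(τ) ≤ C τ^{-3/2} for all τ ≥ 1 and some constant C; in particular h'(τ) > 1 for all τ > 0. -/

import Mathlib

private lemma quad_bound (L a b : ℝ) (hL : 0 ≤ L) (ha : 0 ≤ a) (hb : 0 ≤ b)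
    (h : L ^ 2 ≤ a * L + b) : L ≤ a + Real.sqrt b := by
  by_contra hc
  push_neg at hc
  nlinarith [Real.sq_sqrt hb, Real.sqrt_nonneg b]

theorem time_change_derivative (r c T : ℝ) (hr : 0 < r) (hc : 0 < c) (hT : 0 < T)
    (hmono : StrictMonoOn (fun t => c * t - r * Real.log ((t + T) / T)) (Set.Ici 0))
    (h : ℝ → ℝ)
    (hrange : ∀ τ, 0 ≤ τ → 0 ≤ h τ)
    (himpl : ∀ τ, 0 ≤ τ → c * τ = c * h τ - r * Real.log ((h τ + T) / T))
    (hdiff : ∀ τ, 0 ≤ τ → DifferentiableAt ℝ h τ)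
    (β : ℝ → ℝ)
    (hβ : β = fun τ => r ^ 2 * Real.log ((h τ + T) / T) /
      (c * (τ + T) * (c * (τ + T) + r * Real.log ((h τ + T) / T)))) :
    (∀ τ, 0 ≤ τ → 0 ≤ β τ ∧ 1 / deriv h τ = 1 - r / (c * (τ + T)) + β τ) ∧
    (∃ C : ℝ, ∀ τ, 1 ≤ τ → β τ ≤ C * τ ^ (-(3 : ℝ) / 2)) ∧
    (∀ τ, 0 < τ → 1 < deriv h τ) := by
  -- the key chain-rule identity
  have key : ∀ τ, 0 ≤ τ → (c - r * (h τ + T)⁻¹) * deriv h τ = c := by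
    intro τ hτ
    have hpos : 0 < h τ + T := by linarith [hrange τ hτ]
    have hlog : HasDerivAt (fun x : ℝ => Real.log (x + T)) ((h τ + T)⁻¹) (h τ) := by
      have := (Real.hasDerivAt_log (ne_of_gt hpos)).comp (h τ)
        ((hasDerivAt_id (h τ)).add_const T)
      simpa [Function.comp_def] using this
    have hg2 : HasDerivAt (fun x : ℝ => c * x - r * (Real.log (x + T) - Real.log T))
        (c - r * (h τ + T)⁻¹) (h τ) := by
      have h1 : HasDerivAt (fun x : ℝ => c * x) c (h τ) := by
        simpa using (hasDerivAt_id (h τ)).const_mul c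
      exact h1.sub ((hlog.sub_const (Real.log T)).const_mul r)
    have hg : HasDerivAt (fun x : ℝ => c * x - r * Real.log ((x + T) / T))
        (c - r * (h τ + T)⁻¹) (h τ) := by
      apply hg2.congr_of_eventuallyEq
      have hev : ∀ᶠ x in nhds (h τ), -T < x := eventually_gt_nhds (by linarith [hrange τ hτ])
      filter_upwards [hev] with x hx
      rw [Real.log_div (by linarith) (ne_of_gt hT)]
    have hcomp : HasDerivAt ((fun x : ℝ => c * x - r * Real.log ((x + T) / T)) ∘ h)
        ((c - r * (h τ + T)⁻¹) * deriv h τ) τ :=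
      hg.comp τ (hdiff τ hτ).hasDerivAt
    have hd1 : HasDerivWithinAt ((fun x : ℝ => c * x - r * Real.log ((x + T) / T)) ∘ h)
        ((c - r * (h τ + T)⁻¹) * deriv h τ) (Set.Ici 0) τ := hcomp.hasDerivWithinAt
    have hd2 : HasDerivWithinAt ((fun x : ℝ => c * x - r * Real.log ((x + T) / T)) ∘ h)
        c (Set.Ici 0) τ := by
      have hlin : HasDerivWithinAt (fun t : ℝ => c * t) c (Set.Ici 0) τ := by
        simpa using ((hasDerivAt_id τ).const_mul c).hasDerivWithinAt
      apply hlin.congr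
      · intro x hx
        simpa using (himpl x hx).symm
      · simpa using (himpl τ hτ).symm
    have hu : UniqueDiffWithinAt ℝ (Set.Ici (0:ℝ)) τ := uniqueDiffOn_Ici 0 τ hτ
    exact (hd1.derivWithin hu).symm.trans (hd2.derivWithin hu)
  -- cT ≥ r
  have hcT : r ≤ c * T := by
    by_contra hlt
    push_neg at hlt
    set x0 : ℝ := r / c - T with hx0
    have hx0pos : 0 < x0 := by
      rw [hx0, sub_pos, lt_div_iff₀ hc]; nlinarith
    have hf0 : (fun t => c * t - r * Real.log ((t + T) / T)) 0 = 0 := by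
      simp [div_self (ne_of_gt hT)]
    have hfx0 : (fun t => c * t - r * Real.log ((t + T) / T)) x0
        = r - c * T - r * Real.log (r / (c * T)) := by
      have harg : (x0 + T) / T = r / (c * T) := by
        rw [hx0]; field_simp; ring
      simp only [harg, hx0]
      field_simp
      rw [sub_add_cancel]
    have hlt2 := hmono (by simp : (0:ℝ) ∈ Set.Ici (0:ℝ))
      (le_of_lt hx0pos : x0 ∈ Set.Ici (0:ℝ)) hx0pos
    rw [hf0, hfx0] at hlt2
    have hu : 0 < c * T / r := by positivity
    have hlog := Real.log_le_sub_one_of_pos hu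
    have heq : Real.log (r / (c * T)) = - Real.log (c * T / r) := by
      rw [← Real.log_inv]; congr 1; field_simp
    rw [heq] at hlt2
    have hineq : r * Real.log (c * T / r) ≤ c * T - r := by
      have h2 := mul_le_mul_of_nonneg_left hlog (le_of_lt hr)
      calc r * Real.log (c * T / r) ≤ r * (c * T / r - 1) := h2
        _ = c * T - r := by field_simp
    nlinarith
  -- main expansion
  have main : ∀ τ, 0 ≤ τ → 0 ≤ β τ ∧ 1 / deriv h τ = 1 - r / (c * (τ + T)) + β τ := by
    intro τ hτ
    have hH : 0 ≤ h τ := hrange τ hτ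
    have hpos : 0 < h τ + T := by linarith
    set L : ℝ := Real.log ((h τ + T) / T) with hL
    have hLnn : 0 ≤ L := Real.log_nonneg (by rw [le_div_iff₀ hT]; linarith)
    have hrel : c * (h τ + T) = c * (τ + T) + r * L := by
      have h0 := himpl τ hτ; rw [← hL] at h0; linear_combination -h0
    have hP : 0 < c * (τ + T) := by positivity
    have hPQ : 0 < c * (τ + T) + r * L := by rw [← hrel]; positivity
    have hcH : 0 < c * (h τ + T) := by positivity
    constructor
    · rw [hβ]
      have : (0:ℝ) ≤ r ^ 2 * L := by positivity
      exact div_nonneg this (le_of_lt (mul_pos hP hPQ))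
    · have hk := key τ hτ
      have hD : deriv h τ ≠ 0 := by
        intro h0; rw [h0, mul_zero] at hk; exact (ne_of_gt hc) hk.symm
      have hk' : (c * (h τ + T) - r) * deriv h τ = c * (h τ + T) := by
        have h2 := congrArg (fun z => z * (h τ + T)) hk
        field_simp at h2
        linarith
      have hgoal : 1 / deriv h τ = (c * (h τ + T) - r) / (c * (h τ + T)) := by
        rw [div_eq_div_iff hD (ne_of_gt hcH)]
        linarith [hk']
      rw [hgoal, hβ]
      simp only [← hL]
      rw [hrel]
      field_simp
      ring
  refine ⟨main, ?_, ?_⟩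
  · -- the bound
    set K : ℝ := 4 * r / (c * T) + 2 * Real.sqrt ((1 + T) / T) with hK
    refine ⟨r ^ 2 * K / c ^ 2, ?_⟩
    intro τ hτ1
    have hτ : (0:ℝ) ≤ τ := by linarith
    have hτpos : (0:ℝ) < τ := by linarith
    have hH : 0 ≤ h τ := hrange τ hτ
    have hpos : 0 < h τ + T := by linarith
    set L : ℝ := Real.log ((h τ + T) / T) with hL
    have hLnn : 0 ≤ L := Real.log_nonneg (by rw [le_div_iff₀ hT]; linarith)
    have hrel : c * (h τ + T) = c * (τ + T) + r * L := by
      have h0 := himpl τ hτ; rw [← hL] at h0; linear_combination -h0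
    have hLsq : L ^ 2 ≤ 4 * r / (c * T) * L + 4 * (τ + T) / T := by
      have hy : (0:ℝ) < (h τ + T) / T := by positivity
      have h1 : L ≤ 2 * Real.sqrt ((h τ + T) / T) := by
        have hs := Real.log_le_sub_one_of_pos (Real.sqrt_pos.mpr hy)
        have hls : Real.log (Real.sqrt ((h τ + T) / T)) = L / 2 := by
          rw [Real.log_sqrt (le_of_lt hy)]
        rw [hls] at hs
        have := Real.sqrt_nonneg ((h τ + T) / T)
        linarith
      have h2 : L ^ 2 ≤ 4 * ((h τ + T) / T) := by
        have hsq := Real.sq_sqrt (le_of_lt hy)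
        nlinarith [Real.sqrt_nonneg ((h τ + T) / T)]
      have h3 : (h τ + T) / T = (τ + T) / T + r * L / (c * T) := by
        field_simp
        linear_combination hrel
      rw [h3] at h2
      have h4 : 4 * ((τ + T) / T + r * L / (c * T)) = 4 * r / (c * T) * L + 4 * (τ + T) / T := by
        field_simp; ring
      linarith [h2]
    have hsτ1 : (1:ℝ) ≤ Real.sqrt τ := by
      rw [show (1:ℝ) = Real.sqrt 1 by simp]
      exact Real.sqrt_le_sqrt hτ1
    have hLb : L ≤ K * Real.sqrt τ := by
      have hq := quad_bound L (4 * r / (c * T)) (4 * (τ + T) / T) hLnn (by positivity)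
        (by positivity) hLsq
      have hsb : Real.sqrt (4 * (τ + T) / T) ≤ 2 * Real.sqrt ((1 + T) / T) * Real.sqrt τ := by
        have hmono2 : (4:ℝ) * (τ + T) / T ≤ 2 ^ 2 * ((1 + T) / T * τ) := by
          rw [div_le_iff₀ hT]
          have : τ + T ≤ τ * (1 + T) := by nlinarith
          calc 4 * (τ + T) ≤ 4 * (τ * (1 + T)) := by linarith
            _ = 2 ^ 2 * ((1 + T) / T * τ) * T := by field_simp; ring
        calc Real.sqrt (4 * (τ + T) / T) ≤ Real.sqrt (2 ^ 2 * ((1 + T) / T * τ)) :=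
              Real.sqrt_le_sqrt hmono2
          _ = 2 * Real.sqrt ((1 + T) / T * τ) := by
              rw [Real.sqrt_mul (by norm_num), Real.sqrt_sq (by norm_num)]
          _ = 2 * Real.sqrt ((1 + T) / T) * Real.sqrt τ := by
              rw [Real.sqrt_mul (by positivity)]; ring
      have ha1 : 4 * r / (c * T) ≤ 4 * r / (c * T) * Real.sqrt τ := by
        have hann : (0:ℝ) ≤ 4 * r / (c * T) := by positivity
        nlinarith [hsτ1, hann]
      calc L ≤ 4 * r / (c * T) + Real.sqrt (4 * (τ + T) / T) := hq
        _ ≤ 4 * r / (c * T) * Real.sqrt τ + 2 * Real.sqrt ((1 + T) / T) * Real.sqrt τ := by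
            linarith [hsb]
        _ = K * Real.sqrt τ := by rw [hK]; ring
    have hrpow : τ ^ (-(3:ℝ)/2) = Real.sqrt τ / τ ^ 2 := by
      rw [Real.sqrt_eq_rpow, show -(3:ℝ)/2 = 1/2 + (-2 : ℝ) by norm_num,
        Real.rpow_add hτpos, Real.rpow_neg (le_of_lt hτpos),
        show (2:ℝ) = ((2:ℕ):ℝ) by norm_num, Real.rpow_natCast]
      ring
    have hP : 0 < c * (τ + T) := by positivity
    have hPQ : 0 < c * (τ + T) + r * L := by rw [← hrel]; positivity
    have hKnn : 0 ≤ K := by rw [hK]; positivity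
    have hcτ : 0 < c * τ := by positivity
    calc β τ = r ^ 2 * L / (c * (τ + T) * (c * (τ + T) + r * L)) := by rw [hβ]
      _ ≤ r ^ 2 * (K * Real.sqrt τ) / ((c * τ) * (c * τ)) := by
          have hnum : r ^ 2 * L ≤ r ^ 2 * (K * Real.sqrt τ) :=
            mul_le_mul_of_nonneg_left hLb (by positivity)
          have he1 : c * τ ≤ c * (τ + T) :=
            mul_le_mul_of_nonneg_left (by linarith) (le_of_lt hc)
          have he2 : c * (τ + T) ≤ c * (τ + T) + r * L := by
            have := mul_nonneg (le_of_lt hr) hLnn; linarith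
          have hden : (c * τ) * (c * τ) ≤ c * (τ + T) * (c * (τ + T) + r * L) :=
            mul_le_mul he1 (he1.trans he2) (le_of_lt hcτ) (by positivity)
          exact div_le_div₀ (le_trans (by positivity) hnum) hnum (by positivity) hden
      _ = r ^ 2 * K / c ^ 2 * (Real.sqrt τ / τ ^ 2) := by field_simp
      _ = r ^ 2 * K / c ^ 2 * τ ^ (-(3:ℝ)/2) := by rw [hrpow]
  · -- deriv h τ > 1
    intro τ hτ
    have hτ0 : (0:ℝ) ≤ τ := le_of_lt hτ
    have hH : 0 ≤ h τ := hrange τ hτ0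
    have hHpos : 0 < h τ := by
      rcases lt_or_eq_of_le hH with h' | h'
      · exact h'
      · exfalso
        have h0 := himpl τ hτ0
        rw [← h'] at h0
        simp [div_self (ne_of_gt hT)] at h0
        rcases h0 with h0 | h0
        · exact (ne_of_gt hc) h0
        · exact (ne_of_gt hτ) h0
    have hpos : 0 < h τ + T := by linarith
    have hA : 0 < c - r * (h τ + T)⁻¹ := by
      have h1 : r * (h τ + T)⁻¹ < r * T⁻¹ := by
        apply mul_lt_mul_of_pos_left _ hr
        exact inv_strictAnti₀ hT (by linarith)
      have h2 : r * T⁻¹ ≤ c := by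
        rw [← div_eq_mul_inv, div_le_iff₀ hT]; linarith [hcT]
      linarith
    have hk := key τ hτ0
    have hAc : c - r * (h τ + T)⁻¹ < c := by
      have : 0 < r * (h τ + T)⁻¹ := by positivity
      linarith
    nlinarith [hk, hA, hAc]
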